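/- Let K be a field, let g_1, …, g_t ∈ K[[X]] be nonzero formal power series with strictly increasing orders n_1 < n_2 < … < n_t (where n_i = ord(g_i)), and let f ∈ K[[X]]. Define recursively f_0 = f and, for 1 ≤ i ≤ t, f_i = f_{i−1} − (c_i / b_i)·g_i, where c_i is the coefficient of X^{n_i} in f_{i−1} and b_i is the (nonzero) coefficient of X^{n_i} in g_i. Then f lies in the K-span of g_1, …, g_t if and only if f_t = 0. -/

import Mathlib

open PowerSeries

/-- Correctness of the reduction step of the upper-triangular membership algorithm:
given nonzero power series `g_1, …, g_t` with strictly increasing orders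
`n_1 < ⋯ < n_t` (where `n_i = ord (g_i)`) and `f`, define `f_0 = f` and
`f_i = f_{i-1} - (c_i / b_i) • g_i` where `c_i` is the coefficient of `X^{n_i}` in
`f_{i-1}` and `b_i` the coefficient of `X^{n_i}` in `g_i`.  Then `f` lies in the span
of `g_1, …, g_t` if and only if `f_t = 0`. -/
theorem mem_span_iff_reduction_eq_zero
    (K : Type*) [Field K] (t : ℕ)
    (g : Fin t → PowerSeries K) (n : Fin t → ℕ)
    (hg : ∀ i, g i ≠ 0)
    (hord : ∀ i, (g i).order = n i)
    (hmono : StrictMono n)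
    (f : PowerSeries K)
    (F : Fin (t + 1) → PowerSeries K)
    (hF0 : F 0 = f)
    (hFrec : ∀ i : Fin t, F i.succ =
      F i.castSucc -
        ((coeff (n i) (F i.castSucc)) / (coeff (n i) (g i))) • g i) :
    f ∈ Submodule.span K (Set.range g) ↔ F (Fin.last t) = 0 := by
  have hb : ∀ i, coeff (n i) (g i) ≠ 0 := fun i =>
    (PowerSeries.order_eq_nat.mp (hord i)).1
  have hlt : ∀ i j : Fin t, i < j → coeff (n i) (g j) = 0 := by
    intro i j hij
    apply PowerSeries.coeff_of_lt_order
    rw [hord j]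
    exact_mod_cast hmono hij
  -- difference of F j and f lies in span
  have hdiff : ∀ j : Fin (t + 1), F j - f ∈ Submodule.span K (Set.range g) := by
    intro j
    induction j using Fin.induction with
    | zero => simp [hF0]
    | succ i ih =>
      rw [hFrec i, sub_right_comm]
      exact Submodule.sub_mem _ ih
        (Submodule.smul_mem _ _ (Submodule.subset_span ⟨i, rfl⟩))
  -- vanishing of coefficients
  have hzero : ∀ j : Fin (t + 1), ∀ i : Fin t, (i : ℕ) < (j : ℕ) →
      coeff (n i) (F j) = 0 := by
    intro j
    induction j using Fin.induction with
    | zero => intro i h; exact absurd h (Nat.not_lt_zero _)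
    | succ k ih =>
      intro i hik
      rw [hFrec k, map_sub, map_smul, smul_eq_mul]
      rcases lt_or_eq_of_le (Nat.lt_succ_iff.mp (by rw [Fin.val_succ] at hik; exact hik)) with h | h
      · rw [ih i (by simpa using h), hlt i k (by exact_mod_cast h), mul_zero, sub_zero]
      · have : i = k := Fin.ext h
        subst this
        rw [div_mul_cancel₀ _ (hb i), sub_self]
  constructor
  · intro hf
    have hFl : F (Fin.last t) ∈ Submodule.span K (Set.range g) := by
      have := Submodule.add_mem _ (hdiff (Fin.last t)) hf
      simpa using this
    obtain ⟨c, hc⟩ := (Submodule.mem_span_range_iff_exists_fun K).mp hFl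
    have key : ∀ i : Fin t, (∀ j, j < i → c j = 0) → c i = 0 := by
      intro i ihc
      have hco : coeff (n i) (F (Fin.last t)) = c i * coeff (n i) (g i) := by
        rw [← hc, map_sum]
        rw [Finset.sum_eq_single i]
        · simp
        · intro j _ hj
          rcases lt_or_gt_of_ne hj with h | h
          · rw [ihc j h]; simp
          · rw [map_smul, smul_eq_mul, hlt i j h, mul_zero]
        · intro h; exact absurd (Finset.mem_univ i) h
      have h0 : coeff (n i) (F (Fin.last t)) = 0 :=
        hzero (Fin.last t) i i.isLt
      rw [h0] at hco
      exact (mul_eq_zero.mp hco.symm).resolve_right (hb i)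
    have hcz : ∀ m : ℕ, ∀ i : Fin t, (i : ℕ) ≤ m → c i = 0 := by
      intro m
      induction m with
      | zero => intro i hi; exact key i fun j hj => absurd (Fin.lt_iff_val_lt_val.mp hj) (by omega)
      | succ m ih => intro i hi; exact key i fun j hj => ih j (by have := Fin.lt_iff_val_lt_val.mp hj; omega)
    rw [← hc]
    simp [fun i : Fin t => hcz (i : ℕ) i le_rfl]
  · intro h0
    have := Submodule.neg_mem _ (hdiff (Fin.last t))
    rw [h0] at this
    simpa using this
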